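/- arXiv:1301.4439 — 4 statements merged into one kernel-verified Lean document; each statement's English description precedes it below -/
import Mathlib

section
/- Let G be an n×n real matrix that is diagonalizable with nonnegative real eigenvalues, i.e. G = V D V⁻¹ for an invertible matrix V and a diagonal matrix D with all diagonal entries D_ii ≥ 0. Let E be the diagonal matrix with E_ii = 1 if D_ii = 0 and E_ii = 0 otherwise, and let D♯ be the diagonal matrix with (D♯)_ii = (D_ii)⁻¹ if D_ii ≠ 0 and (D♯)_ii = 0 otherwise. Then the improper integral ∫₀^∞ (exp(−G·τ) − V E V⁻¹) dτ converges entrywise and equals V D♯ V⁻¹. -/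
open Matrix MeasureTheory

lemma exp_neg_mul_integral {b : ℝ} (hb : 0 < b) :
    ∫ x in Set.Ioi (0 : ℝ), Real.exp (-b * x) = b⁻¹ := by
  have hderiv : ∀ x ∈ Set.Ici (0 : ℝ),
      HasDerivAt (fun x => -Real.exp (-b * x) / b) (Real.exp (-b * x)) x := by
    intro x _
    simpa [hb.ne'] using ((hasDerivAt_id x).const_mul b).neg.exp.neg.div_const b
  have htend : Filter.Tendsto (fun x => -Real.exp (-b * x) / b) Filter.atTop (nhds 0) := by
    have : Filter.Tendsto (fun x => -Real.exp (-b * x) / b) Filter.atTop (nhds (-0 / b)) := by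
      refine Filter.Tendsto.div_const (Filter.Tendsto.neg ?_) _
      exact Real.tendsto_exp_atBot.comp
        (Filter.tendsto_id.const_mul_atTop_of_neg (neg_neg_iff_pos.2 hb))
    simpa using this
  have h := integral_Ioi_of_hasDerivAt_of_tendsto' hderiv (exp_neg_integrableOn_Ioi 0 hb) htend
  simp only [mul_zero, Real.exp_zero] at h
  rw [h]
  field_simp
  ring

lemma conj_diag_entry {n : ℕ} (V W : Matrix (Fin n) (Fin n) ℝ) (f : Fin n → ℝ) (i j : Fin n) :
    (V * Matrix.diagonal f * W) i j = ∑ k, V i k * f k * W k j := by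
  rw [Matrix.mul_assoc]
  simp [Matrix.mul_apply, Matrix.diagonal_apply, ite_mul, Finset.sum_ite_eq, mul_assoc]

/-- Lemma 1 (integral identity): for `G = V D V⁻¹` diagonalizable with nonnegative real
eigenvalues, the improper integral `∫₀^∞ (exp(−Gτ) − V E V⁻¹) dτ` converges entrywise and
equals `V D♯ V⁻¹`. -/
theorem stmt_0 {n : ℕ} (G V E Dsharp : Matrix (Fin n) (Fin n) ℝ) (d : Fin n → ℝ)
    (hV : IsUnit V.det) (hd : ∀ i, 0 ≤ d i)
    (hG : G = V * Matrix.diagonal d * V⁻¹)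
    (hE : E = Matrix.diagonal (fun i => if d i = 0 then (1 : ℝ) else 0))
    (hDs : Dsharp = Matrix.diagonal (fun i => if d i ≠ 0 then (d i)⁻¹ else 0)) :
    ∀ i j,
      IntegrableOn
        (fun τ : ℝ => (NormedSpace.exp (-(τ • G))) i j - (V * E * V⁻¹) i j)
        (Set.Ioi (0 : ℝ)) ∧
      ∫ τ in Set.Ioi (0 : ℝ),
          ((NormedSpace.exp (-(τ • G))) i j - (V * E * V⁻¹) i j)
        = (V * Dsharp * V⁻¹) i j := by
  have hVu : IsUnit V := (Matrix.isUnit_iff_isUnit_det V).mpr hV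
  -- diagonalize the exponential
  have hexp : ∀ τ : ℝ, NormedSpace.exp (-(τ • G))
      = V * Matrix.diagonal (fun k => Real.exp (-d k * τ)) * V⁻¹ := by
    intro τ
    have h1 : -(τ • G) = V * Matrix.diagonal (fun k => -d k * τ) * V⁻¹ := by
      have hdg : Matrix.diagonal (fun k => -d k * τ) = (-τ) • Matrix.diagonal d := by
        ext a b
        by_cases h : a = b <;> simp [Matrix.diagonal_apply, h] <;> ring
      rw [hG, hdg, Matrix.mul_smul, Matrix.smul_mul, ← neg_smul]
    rw [h1, Matrix.exp_conj V _ hVu, Matrix.exp_diagonal]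
    have : NormedSpace.exp (fun k => -d k * τ) = fun k => Real.exp (-d k * τ) := by
      rw [Pi.exp_def]
      funext k
      rw [Real.exp_eq_exp_ℝ]
    rw [this]
  intro i j
  set c : Fin n → ℝ := fun k => V i k * V⁻¹ k j with hc
  set g : Fin n → ℝ → ℝ :=
    fun k τ => c k * (Real.exp (-d k * τ) - if d k = 0 then 1 else 0) with hg
  have key : ∀ τ : ℝ,
      (NormedSpace.exp (-(τ • G))) i j - (V * E * V⁻¹) i j = ∑ k, g k τ := by
    intro τ
    rw [hexp τ, hE, conj_diag_entry, conj_diag_entry, ← Finset.sum_sub_distrib]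
    refine Finset.sum_congr rfl fun k _ => ?_
    simp only [hg, hc]
    ring
  have hfun : (fun τ : ℝ => (NormedSpace.exp (-(τ • G))) i j - (V * E * V⁻¹) i j)
      = fun τ => ∑ k, g k τ := funext key
  have hint : ∀ k, IntegrableOn (g k) (Set.Ioi (0 : ℝ)) := by
    intro k
    by_cases hk : d k = 0
    · have : g k = fun _ => (0 : ℝ) := by
        funext τ; simp [hg, hk]
      rw [this]
      exact (integrableOn_const_iff (C := (0 : ℝ))).mpr (Or.inl (by simp))
    · have hpos : 0 < d k := lt_of_le_of_ne (hd k) (Ne.symm hk)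
      have : g k = fun τ => c k * Real.exp (-d k * τ) := by
        funext τ; simp [hg, hk]
      rw [this]
      exact (exp_neg_integrableOn_Ioi 0 hpos).const_mul _
  have hintsum : IntegrableOn
      (fun τ : ℝ => (NormedSpace.exp (-(τ • G))) i j - (V * E * V⁻¹) i j)
      (Set.Ioi (0 : ℝ)) := by
    rw [hfun]
    exact integrable_finset_sum _ fun k _ => hint k
  refine ⟨hintsum, ?_⟩
  rw [hfun, integral_finset_sum _ fun k _ => hint k, hDs, conj_diag_entry]
  refine Finset.sum_congr rfl fun k _ => ?_
  by_cases hk : d k = 0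
  · have : g k = fun _ => (0 : ℝ) := by funext τ; simp [hg, hk]
    rw [this]
    simp [hk]
  · have hpos : 0 < d k := lt_of_le_of_ne (hd k) (Ne.symm hk)
    have : g k = fun τ => c k * Real.exp (-d k * τ) := by
      funext τ; simp [hg, hk]
    rw [this, integral_const_mul, exp_neg_mul_integral hpos]
    simp [hk, hc]
    ring
end

section
/- Let G be an n×n real matrix with G = V D V⁻¹ for an invertible matrix V and a diagonal matrix D with all diagonal entries D_ii ≥ 0; let E and D♯ be as in the context. Let Π : Fin n → ℝ satisfy ∑_j Π_j = 1 and (V E V⁻¹)_{ij} = Π_j for all i, j, and let x : Fin n → ℝ. Then the improper integral ∫₀^∞ ( ∑_{i,j} x_i x_j Π_i (exp(−G·τ))_{ij} − (∑_i x_i Π_i)² ) dτ converges and equals ∑_{i,j} Π_i x_i (V D♯ V⁻¹)_{ij} x_j. -/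
open Matrix MeasureTheory Finset

lemma scalar_int {b : ℝ} (hb : 0 < b) :
    ∫ x in Set.Ioi (0:ℝ), Real.exp (-(b * x)) = b⁻¹ := by
  have hbx : Filter.Tendsto (fun x : ℝ => -(b*x)) Filter.atTop Filter.atBot := by
    have := Filter.Tendsto.const_mul_atTop hb (Filter.tendsto_id (α := ℝ) (x := Filter.atTop))
    exact Filter.tendsto_neg_atBot_iff.mpr this
  have h := MeasureTheory.integral_Ioi_of_hasDerivAt_of_tendsto
    (f := fun x => -b⁻¹ * Real.exp (-(b * x))) (f' := fun x => Real.exp (-(b*x))) (a := 0)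
    (Continuous.continuousWithinAt (by continuity))
    (fun x _ => by
      have h1 : HasDerivAt (fun x : ℝ => -(b*x)) (-b) x := by
        have h := ((hasDerivAt_id x).const_mul b).neg
        rw [mul_one] at h
        exact h
      have := (h1.exp).const_mul (-b⁻¹)
      convert this using 1
      · rfl
      field_simp)
    (by simpa [neg_mul] using exp_neg_integrableOn_Ioi 0 hb)
    (by
      have h2 : Filter.Tendsto (fun x : ℝ => Real.exp (-(b*x))) Filter.atTop (nhds 0) := by
        simpa [Function.comp_def] using Real.tendsto_exp_atBot.comp hbx
      simpa using h2.const_mul (-b⁻¹))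
  rw [h]
  simp

lemma exp_decomp {n : ℕ} (V : Matrix (Fin n) (Fin n) ℝ) (d : Fin n → ℝ)
    (hV : IsUnit V.det) (τ : ℝ) :
    NormedSpace.exp (-(τ • (V * Matrix.diagonal d * V⁻¹)))
      = V * Matrix.diagonal (fun k => Real.exp (-(d k * τ))) * V⁻¹ := by
  have hu : IsUnit V := (Matrix.isUnit_iff_isUnit_det V).mpr hV
  have h1 : -(τ • (V * Matrix.diagonal d * V⁻¹))
      = V * Matrix.diagonal (fun k => -(d k * τ)) * V⁻¹ := by
    ext i j
    simp [Matrix.mul_apply, Matrix.diagonal_apply, Finset.mul_sum, Finset.sum_ite_eq,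
      Finset.sum_ite_eq', mul_comm, mul_left_comm]
    ring_nf
  rw [h1, Matrix.exp_conj V _ hu, Matrix.exp_diagonal]
  congr 1
  ext k
  simp [Real.exp_eq_exp_ℝ]

lemma key_quad {n : ℕ} (V : Matrix (Fin n) (Fin n) ℝ) (Pi x w : Fin n → ℝ) :
    ∑ i, ∑ j, x i * x j * Pi i * (V * Matrix.diagonal w * V⁻¹) i j
      = ∑ k, (∑ i, ∑ j, x i * x j * Pi i * V i k * V⁻¹ k j) * w k := by
  have entry : ∀ i j, (V * Matrix.diagonal w * V⁻¹) i j = ∑ k, V i k * w k * V⁻¹ k j :=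
    fun i j => by
      rw [Matrix.mul_apply]
      exact Finset.sum_congr rfl fun k _ => by rw [Matrix.mul_diagonal]
  calc ∑ i, ∑ j, x i * x j * Pi i * (V * Matrix.diagonal w * V⁻¹) i j
      = ∑ i, ∑ j, ∑ k, x i * x j * Pi i * (V i k * w k * V⁻¹ k j) := by
        simp only [entry, Finset.mul_sum]
    _ = ∑ i, ∑ k, ∑ j, x i * x j * Pi i * (V i k * w k * V⁻¹ k j) :=
        Finset.sum_congr rfl fun i _ => Finset.sum_comm
    _ = ∑ k, ∑ i, ∑ j, x i * x j * Pi i * (V i k * w k * V⁻¹ k j) :=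
        Finset.sum_comm
    _ = ∑ k, (∑ i, ∑ j, x i * x j * Pi i * V i k * V⁻¹ k j) * w k := by
        refine Finset.sum_congr rfl fun k _ => ?_
        rw [Finset.sum_mul]
        refine Finset.sum_congr rfl fun i _ => ?_
        rw [Finset.sum_mul]
        exact Finset.sum_congr rfl fun j _ => by ring

/-- Proposition 1: the diffusion coefficient of a Markov chain, defined as the improper
integral of the stationary autocovariance, equals the quadratic form of the group
inverse `V D♯ V⁻¹` of the generator `G = V D V⁻¹`. -/
theorem stmt_4 {n : ℕ} (G V E Dsharp : Matrix (Fin n) (Fin n) ℝ) (d : Fin n → ℝ)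
    (hV : IsUnit V.det) (hd : ∀ i, 0 ≤ d i)
    (hG : G = V * Matrix.diagonal d * V⁻¹)
    (hE : E = Matrix.diagonal (fun i => if d i = 0 then (1 : ℝ) else 0))
    (hDs : Dsharp = Matrix.diagonal (fun i => if d i ≠ 0 then (d i)⁻¹ else 0))
    (Pi x : Fin n → ℝ)
    (hPisum : ∑ j, Pi j = 1)
    (hPistat : ∀ i j, (V * E * V⁻¹) i j = Pi j) :
    IntegrableOn
      (fun τ : ℝ =>
        (∑ i, ∑ j, x i * x j * Pi i * (NormedSpace.exp (-(τ • G))) i j)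
          - (∑ i, x i * Pi i) ^ 2)
      (Set.Ioi (0 : ℝ)) ∧
    ∫ τ in Set.Ioi (0 : ℝ),
        ((∑ i, ∑ j, x i * x j * Pi i * (NormedSpace.exp (-(τ • G))) i j)
          - (∑ i, x i * Pi i) ^ 2)
      = ∑ i, ∑ j, Pi i * x i * (V * Dsharp * V⁻¹) i j * x j := by
  classical
  set c : Fin n → ℝ := fun k => ∑ i, ∑ j, x i * x j * Pi i * V i k * V⁻¹ k j with hc
  set F : Fin n → ℝ → ℝ :=
    fun k τ => Real.exp (-(d k * τ)) - (if d k = 0 then 1 else 0) with hF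
  -- square term rewrite
  have hsq : (∑ i, x i * Pi i) ^ 2 = ∑ k, c k * (if d k = 0 then (1:ℝ) else 0) := by
    have : (∑ i, x i * Pi i) ^ 2 = ∑ i, ∑ j, x i * x j * Pi i * (V * E * V⁻¹) i j := by
      rw [sq, Finset.sum_mul_sum]
      refine Finset.sum_congr rfl fun i _ => Finset.sum_congr rfl fun j _ => by
        rw [hPistat i j]; ring
    rw [this, hE, key_quad]
  -- pointwise formula for the integrand
  have hpt : ∀ τ : ℝ,
      (∑ i, ∑ j, x i * x j * Pi i * (NormedSpace.exp (-(τ • G))) i j)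
        - (∑ i, x i * Pi i) ^ 2 = ∑ k, c k * F k τ := by
    intro τ
    rw [hG, exp_decomp V d hV τ, key_quad, hsq, ← Finset.sum_sub_distrib]
    exact Finset.sum_congr rfl fun k _ => by rw [hF]; ring
  -- integrability and integral of each F k
  have hFint : ∀ k, IntegrableOn (F k) (Set.Ioi (0:ℝ)) := by
    intro k
    by_cases h : d k = 0
    · have : F k = fun _ => 0 := by funext τ; simp [hF, h]
      rw [this]; exact integrableOn_zero
    · have : F k = fun τ => Real.exp (-(d k * τ)) := by funext τ; simp [hF, h]
      rw [this]
      simpa [neg_mul] using exp_neg_integrableOn_Ioi 0 (lt_of_le_of_ne (hd k) (Ne.symm h))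
  have hFval : ∀ k, ∫ τ in Set.Ioi (0:ℝ), F k τ
      = (if d k ≠ 0 then (d k)⁻¹ else 0) := by
    intro k
    by_cases h : d k = 0
    · have : F k = fun _ => 0 := by funext τ; simp [hF, h]
      rw [this]; simp [h]
    · have : F k = fun τ => Real.exp (-(d k * τ)) := by funext τ; simp [hF, h]
      rw [this, scalar_int (lt_of_le_of_ne (hd k) (Ne.symm h))]
      simp [h]
  have hint : IntegrableOn (fun τ => ∑ k, c k * F k τ) (Set.Ioi (0:ℝ)) :=
    MeasureTheory.integrable_finset_sum _ fun k _ => (hFint k).const_mul (c k)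
  constructor
  · exact hint.congr_fun (fun τ _ => (hpt τ).symm) measurableSet_Ioi
  · calc ∫ τ in Set.Ioi (0:ℝ),
        ((∑ i, ∑ j, x i * x j * Pi i * (NormedSpace.exp (-(τ • G))) i j)
          - (∑ i, x i * Pi i) ^ 2)
        = ∫ τ in Set.Ioi (0:ℝ), ∑ k, c k * F k τ := by
          exact MeasureTheory.integral_congr_ae (Filter.Eventually.of_forall fun τ => hpt τ)
      _ = ∑ k, c k * ∫ τ in Set.Ioi (0:ℝ), F k τ := by
          rw [MeasureTheory.integral_finset_sum _ fun k _ => (hFint k).const_mul (c k)]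
          exact Finset.sum_congr rfl fun k _ => MeasureTheory.integral_const_mul _ _
      _ = ∑ k, c k * (if d k ≠ 0 then (d k)⁻¹ else 0) := by
          exact Finset.sum_congr rfl fun k _ => by rw [hFval k]
      _ = ∑ i, ∑ j, Pi i * x i * (V * Dsharp * V⁻¹) i j * x j := by
          rw [hDs]
          rw [show (∑ i, ∑ j, Pi i * x i *
              (V * Matrix.diagonal (fun i => if d i ≠ 0 then (d i)⁻¹ else 0) * V⁻¹) i j * x j)
            = ∑ i, ∑ j, x i * x j * Pi i *
              (V * Matrix.diagonal (fun i => if d i ≠ 0 then (d i)⁻¹ else 0) * V⁻¹) i j from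
            Finset.sum_congr rfl fun i _ => Finset.sum_congr rfl fun j _ => by ring]
          rw [key_quad]
end

section
/- Let Γ > 0, θ ∈ ℝ, F ∈ ℝ, and set c = cos⁴θ, s = sin⁴θ, Γ_pop = Γ(c+s). Let G♯ = (Γ/Γ_pop²)·[[c, −c], [−s, s]], let x = (F, −F), and let Π = (s/(c+s), c/(c+s)). Then ∑_{i,j} Π_i x_i (G♯)_{ij} x_j = (4F²/Γ) · (s·c)/(c+s)³, i.e. the diffusion coefficient equals (4F²/Γ) sin⁴θ cos⁴θ / (sin⁴θ + cos⁴θ)³. -/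
open Matrix Finset

/-- Eq. (B27): the dipole-force diffusion coefficient of a two-level atom,
`⟨x, G♯ x⟩ = ∑ᵢⱼ Πᵢ xᵢ (G♯)ᵢⱼ xⱼ = (4F²/Γ)·s·c/(c+s)³`. -/
theorem stmt_6 (Γ θ F : ℝ) (hΓ : 0 < Γ) (c s Γpop : ℝ)
    (hc : c = (Real.cos θ) ^ 4) (hs : s = (Real.sin θ) ^ 4)
    (hpop : Γpop = Γ * (c + s))
    (Gsharp : Matrix (Fin 2) (Fin 2) ℝ)
    (hGs : Gsharp = (Γ / Γpop ^ 2) • !![c, -c; -s, s])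
    (x Pi : Fin 2 → ℝ)
    (hx : x = ![F, -F])
    (hPi : Pi = ![s / (c + s), c / (c + s)]) :
    ∑ i, ∑ j, Pi i * x i * Gsharp i j * x j
      = (4 * F ^ 2 / Γ) * (s * c) / (c + s) ^ 3 := by
  have hcs : 0 < c + s := by
    rcases eq_or_ne (Real.cos θ) 0 with h | h
    · have : Real.sin θ ≠ 0 := by
        intro hsin
        have := Real.sin_sq_add_cos_sq θ
        rw [hsin, h] at this; norm_num at this
      have : 0 < s := by rw [hs]; positivity
      have hc0 : 0 ≤ c := by rw [hc]; positivity
      linarith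
    · have : 0 < c := by rw [hc]; positivity
      have hs0 : 0 ≤ s := by rw [hs]; positivity
      linarith
  subst hpop hGs hx hPi
  simp [Fin.sum_univ_two, Matrix.smul_apply]
  field_simp
  ring
end

section
/- Let G be an n×n real matrix with G = V D V⁻¹ for an invertible matrix V and a diagonal matrix D with all diagonal entries D_ii ≥ 0; let E and D♯ be as in the context. Then there exists a matrix Z (namely Z = V D♯ V⁻¹) such that simultaneously: (i) exp(−G·τ) converges entrywise to V E V⁻¹ as τ → ∞; (ii) the improper integral ∫₀^∞ (exp(−G·τ) − V E V⁻¹) dτ converges entrywise and equals Z; and (iii) Z satisfies G Z G = G, Z G Z = Z, and G Z = Z G, and Z is the unique matrix with these three properties. -/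
open Matrix MeasureTheory Filter

private theorem aux_int {b : ℝ} (hb : 0 < b) :
    IntegrableOn (fun τ : ℝ => Real.exp (-(τ * b))) (Set.Ioi 0) ∧
    ∫ τ in Set.Ioi (0:ℝ), Real.exp (-(τ * b)) = b⁻¹ := by
  have hint : IntegrableOn (fun τ : ℝ => Real.exp (-(τ * b))) (Set.Ioi 0) := by
    simpa [neg_mul, mul_comm] using exp_neg_integrableOn_Ioi 0 hb
  refine ⟨hint, ?_⟩
  have h := integral_Ioi_of_hasDerivAt_of_tendsto (f := fun x : ℝ => -Real.exp (-(x*b)) / b)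
    (f' := fun x : ℝ => Real.exp (-(x*b))) (a := 0) (m := 0) ?_ ?_ hint ?_
  · rw [h]; field_simp; simp
  · exact (Continuous.continuousWithinAt (by continuity))
  · intro x hx
    have h1 : HasDerivAt (fun x : ℝ => -(x*b)) (-b) x := by
      simpa using ((hasDerivAt_id x).mul_const b).fun_neg
    have h2 := (h1.exp.neg.div_const b)
    convert h2 using 1
    · rfl
    · rfl
    · field_simp
  · have : Tendsto (fun x : ℝ => -Real.exp (-(x*b)) / b) atTop (nhds (-0 / b)) := by
      refine Tendsto.div_const (Tendsto.neg ?_) _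
      refine Real.tendsto_exp_atBot.comp ?_
      have := tendsto_id.atTop_mul_const (r := b) hb
      exact (tendsto_neg_atBot_iff.mpr this)
    simpa using this

private theorem group_inv_unique {R : Type*} [Ring R] {G X Y : R}
    (hX1 : G*X*G = G) (hX2 : X*G*X = X) (hX3 : G*X = X*G)
    (hY1 : G*Y*G = G) (hY2 : Y*G*Y = Y) (hY3 : G*Y = Y*G) : X = Y := by
  have hPQ : X*G = (X*G)*(Y*G) := by
    calc X*G = X*(G*Y*G) := by rw [hY1]
      _ = (X*G)*(Y*G) := by noncomm_ring
  have hQP : G*Y = (X*G)*(Y*G) := by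
    calc G*Y = (G*X*G)*Y := by rw [hX1]
      _ = (G*X)*(G*Y) := by noncomm_ring
      _ = (X*G)*(Y*G) := by rw [hX3, hY3]
  have hP : X*G = G*Y := by rw [hPQ, hQP]
  calc X = X*G*X := hX2.symm
    _ = X*(G*X) := by rw [mul_assoc]
    _ = X*(X*G) := by rw [hX3]
    _ = X*(G*Y) := by rw [hP]
    _ = (X*G)*Y := by rw [mul_assoc]
    _ = (G*Y)*Y := by rw [hP]
    _ = (Y*G)*Y := by rw [hY3]
    _ = Y := hY2

/-- Lemma 1 (full statement): for `G = V D V⁻¹` diagonalizable with nonnegative real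
eigenvalues, there is a matrix `Z = V D♯ V⁻¹` such that (i) `exp(−Gτ) → V E V⁻¹`
entrywise as `τ → ∞`, (ii) the deviation integral `∫₀^∞ (exp(−Gτ) − V E V⁻¹) dτ`
converges entrywise and equals `Z`, and (iii) `Z` is the unique group inverse of `G`. -/
theorem stmt_13 {n : ℕ} (G V E Dsharp : Matrix (Fin n) (Fin n) ℝ) (d : Fin n → ℝ)
    (hV : IsUnit V.det) (hd : ∀ i, 0 ≤ d i)
    (hG : G = V * Matrix.diagonal d * V⁻¹)
    (hE : E = Matrix.diagonal (fun i => if d i = 0 then (1 : ℝ) else 0))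
    (hDs : Dsharp = Matrix.diagonal (fun i => if d i ≠ 0 then (d i)⁻¹ else 0)) :
    ∃ Z : Matrix (Fin n) (Fin n) ℝ, Z = V * Dsharp * V⁻¹ ∧
      (∀ i j, Tendsto (fun τ : ℝ => (NormedSpace.exp (-(τ • G))) i j) atTop
          (nhds ((V * E * V⁻¹) i j))) ∧
      (∀ i j,
        IntegrableOn
          (fun τ : ℝ => (NormedSpace.exp (-(τ • G))) i j - (V * E * V⁻¹) i j)
          (Set.Ioi (0 : ℝ)) ∧
        ∫ τ in Set.Ioi (0 : ℝ),
            ((NormedSpace.exp (-(τ • G))) i j - (V * E * V⁻¹) i j)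
          = Z i j) ∧
      (G * Z * G = G ∧ Z * G * Z = Z ∧ G * Z = Z * G) ∧
      (∀ Z' : Matrix (Fin n) (Fin n) ℝ,
        G * Z' * G = G → Z' * G * Z' = Z' → G * Z' = Z' * G → Z' = Z) := by
  have hVunit : IsUnit V := (Matrix.isUnit_iff_isUnit_det V).mpr hV
  obtain ⟨U, hU⟩ := hVunit
  have hinvV : V⁻¹ * V = 1 := Matrix.nonsing_inv_mul V hV
  -- entry formula for conjugated diagonal matrices
  have hentry : ∀ (f : Fin n → ℝ) (i j : Fin n),
      (V * Matrix.diagonal f * V⁻¹) i j = ∑ k, V i k * f k * V⁻¹ k j := by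
    intro f i j
    rw [Matrix.mul_apply]
    simp only [Matrix.mul_diagonal]
  -- matrix exponential formula
  have hexp : ∀ τ : ℝ, NormedSpace.exp (-(τ • G))
      = V * Matrix.diagonal (fun k => Real.exp (-(τ * d k))) * V⁻¹ := by
    intro τ
    have h1 : -(τ • G) = V * Matrix.diagonal (fun k => -(τ * d k)) * V⁻¹ := by
      have h2 : Matrix.diagonal (fun k => -(τ * d k)) = -(τ • Matrix.diagonal d) := by
        ext i j
        by_cases h : i = j <;> simp [Matrix.diagonal_apply, h]
      rw [hG, h2]
      simp [mul_smul_comm, smul_mul_assoc, Matrix.mul_neg, Matrix.neg_mul]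
    have h3 : (NormedSpace.exp fun k => -(τ * d k)) = fun k => Real.exp (-(τ * d k)) := by
      funext k
      rw [Pi.coe_exp, ← Real.exp_eq_exp_ℝ]
    rw [h1, ← hU, ← Matrix.coe_units_inv, Matrix.exp_units_conj, Matrix.exp_diagonal, h3,
      hU, Matrix.coe_units_inv, hU]
  -- product of conjugated diagonals
  have hconj : ∀ f g : Fin n → ℝ,
      (V * Matrix.diagonal f * V⁻¹) * (V * Matrix.diagonal g * V⁻¹)
        = V * Matrix.diagonal (fun k => f k * g k) * V⁻¹ := by
    intro f g
    calc (V * Matrix.diagonal f * V⁻¹) * (V * Matrix.diagonal g * V⁻¹)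
        = V * Matrix.diagonal f * (V⁻¹ * V) * Matrix.diagonal g * V⁻¹ := by
          simp only [Matrix.mul_assoc]
      _ = V * (Matrix.diagonal f * Matrix.diagonal g) * V⁻¹ := by
          rw [hinvV]; simp only [Matrix.mul_one, Matrix.mul_assoc]
      _ = V * Matrix.diagonal (fun k => f k * g k) * V⁻¹ := by
          rw [Matrix.diagonal_mul_diagonal]
  have hdiag : ∀ f g : Fin n → ℝ, (∀ k, f k = g k) →
      V * Matrix.diagonal f * V⁻¹ = V * Matrix.diagonal g * V⁻¹ := by
    intro f g h
    rw [funext h]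
  refine ⟨V * Dsharp * V⁻¹, rfl, ?_, ?_, ?_, ?_⟩
  · -- (i) tendsto
    intro i j
    have hfun : (fun τ : ℝ => (NormedSpace.exp (-(τ • G))) i j)
        = fun τ => ∑ k, V i k * Real.exp (-(τ * d k)) * V⁻¹ k j := by
      funext τ; rw [hexp τ, hentry]
    rw [hfun, hE, hentry]
    refine tendsto_finset_sum _ (fun k _ => ?_)
    by_cases hk : d k = 0
    · simp only [hk, mul_zero, neg_zero, Real.exp_zero, if_pos rfl]
      exact tendsto_const_nhds
    · have hc : 0 < d k := lt_of_le_of_ne (hd k) (Ne.symm hk)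
      have h0 : Tendsto (fun τ : ℝ => Real.exp (-(τ * d k))) atTop (nhds 0) := by
        refine Real.tendsto_exp_atBot.comp ?_
        exact tendsto_neg_atBot_iff.mpr (tendsto_id.atTop_mul_const hc)
      simpa [hk] using (h0.const_mul (V i k)).mul_const (V⁻¹ k j)
  · -- (ii) integral
    intro i j
    have hfun : ∀ τ : ℝ, (NormedSpace.exp (-(τ • G))) i j - (V * E * V⁻¹) i j
        = ∑ k, V i k * (Real.exp (-(τ * d k)) - (if d k = 0 then (1:ℝ) else 0)) * V⁻¹ k j := by
      intro τ
      rw [hexp τ, hE, hentry, hentry, ← Finset.sum_sub_distrib]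
      exact Finset.sum_congr rfl (fun k _ => by ring)
    have hint : ∀ k : Fin n, IntegrableOn
        (fun τ : ℝ => V i k * (Real.exp (-(τ * d k)) - (if d k = 0 then (1:ℝ) else 0)) * V⁻¹ k j)
        (Set.Ioi (0:ℝ)) := by
      intro k
      by_cases hk : d k = 0
      · refine (integrableOn_zero (s := Set.Ioi (0:ℝ)) (μ := volume)).congr_fun
          (fun x _ => ?_) measurableSet_Ioi
        simp [hk]
      · have hc : 0 < d k := lt_of_le_of_ne (hd k) (Ne.symm hk)
        have h2 : IntegrableOn
            (fun τ : ℝ => V i k * Real.exp (-(τ * d k)) * V⁻¹ k j) (Set.Ioi (0:ℝ)) :=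
          ((aux_int hc).1.const_mul (V i k)).mul_const (V⁻¹ k j)
        refine h2.congr_fun (fun x _ => ?_) measurableSet_Ioi
        simp [hk]
    constructor
    · refine integrableOn_congr_fun (fun x _ => hfun x) measurableSet_Ioi |>.mpr ?_
      exact integrable_finset_sum _ (fun k _ => hint k)
    · have h1 : ∫ τ in Set.Ioi (0:ℝ),
          ((NormedSpace.exp (-(τ • G))) i j - (V * E * V⁻¹) i j)
          = ∑ k, ∫ τ in Set.Ioi (0:ℝ),
              V i k * (Real.exp (-(τ * d k)) - (if d k = 0 then (1:ℝ) else 0)) * V⁻¹ k j := by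
        rw [← integral_finset_sum _ (fun k _ => hint k)]
        exact integral_congr_ae (Filter.Eventually.of_forall (fun x => hfun x))
      rw [h1, hDs, hentry]
      refine Finset.sum_congr rfl (fun k _ => ?_)
      by_cases hk : d k = 0
      · have h0 : (fun τ : ℝ => V i k * (Real.exp (-(τ * d k))
            - (if d k = 0 then (1:ℝ) else 0)) * V⁻¹ k j) = fun _ => 0 := by
          funext τ; simp [hk]
        rw [h0]
        simp [hk]
      · have hc : 0 < d k := lt_of_le_of_ne (hd k) (Ne.symm hk)
        have heq : (fun τ : ℝ => V i k * (Real.exp (-(τ * d k))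
              - (if d k = 0 then (1:ℝ) else 0)) * V⁻¹ k j)
            = fun τ : ℝ => V i k * (Real.exp (-(τ * d k)) * V⁻¹ k j) := by
          funext τ; simp [hk]; ring
        rw [heq, MeasureTheory.integral_const_mul, MeasureTheory.integral_mul_const,
          (aux_int hc).2]
        simp [hk]; ring
  · -- (iii) group inverse properties
    rw [hG, hDs]
    simp only [hconj]
    refine ⟨?_, ?_, ?_⟩
    · exact hdiag _ _ (fun k => by by_cases hk : d k = 0 <;> simp [hk])
    · exact hdiag _ _ (fun k => by by_cases hk : d k = 0 <;> simp [hk])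
    · exact hdiag _ _ (fun k => by by_cases hk : d k = 0 <;> simp [hk, mul_comm])
  · -- uniqueness
    intro Z' h1 h2 h3
    have hZ1 : G * (V * Dsharp * V⁻¹) * G = G := by
      rw [hG, hDs]; simp only [hconj]
      exact hdiag _ _ (fun k => by by_cases hk : d k = 0 <;> simp [hk])
    have hZ2 : (V * Dsharp * V⁻¹) * G * (V * Dsharp * V⁻¹) = V * Dsharp * V⁻¹ := by
      rw [hG, hDs]; simp only [hconj]
      exact hdiag _ _ (fun k => by by_cases hk : d k = 0 <;> simp [hk])
    have hZ3 : G * (V * Dsharp * V⁻¹) = (V * Dsharp * V⁻¹) * G := by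
      rw [hG, hDs]; simp only [hconj]
      exact hdiag _ _ (fun k => by by_cases hk : d k = 0 <;> simp [hk, mul_comm])
    exact group_inv_unique h1 h2 h3 hZ1 hZ2 hZ3
end
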